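/- Fix n ≥ 1 and a vector b = (b₁,…,bₙ) of positive real numbers. Let V₁ = ℝ^{2n} with its standard inner product, V₂ = ℝ, and let B : V₁ × V₁ → ℝ be the alternating bilinear map B((x,y),(x',y')) = Σ_{j=1}^n b_j (x_j y'_j − y_j x'_j). Then this step-two Carnot datum is nascent H-type (equivalently, its H-type deviation δ is zero) if and only if b₁ = b₂ = ⋯ = bₙ. -/

import Mathlib

open scoped RealInnerProductSpace

noncomputable section

variable {V₁ : Type*} [NormedAddCommGroup V₁] [InnerProductSpace ℝ V₁] [FiniteDimensional ℝ V₁]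
variable {V₂ : Type*} [AddCommGroup V₂] [Module ℝ V₂] [FiniteDimensional ℝ V₂]

/-- `g` is an inner product (symmetric positive-definite bilinear form) on `V₂`. -/
structure IsInnerProd (g : V₂ →ₗ[ℝ] V₂ →ₗ[ℝ] ℝ) : Prop where
  symm : ∀ s t : V₂, g s t = g t s
  posdef : ∀ t : V₂, t ≠ 0 → 0 < g t t

/-- The norm `‖t‖_g = √(g t t)` associated to a vertical inner product `g`. -/
def gnorm (g : V₂ →ₗ[ℝ] V₂ →ₗ[ℝ] ℝ) (t : V₂) : ℝ := Real.sqrt (g t t)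

/-- The Hilbert–Schmidt norm `‖F‖_HS = √(trace(F* F))` of an endomorphism of the
inner product space `V₁`. -/
def hsNorm (F : V₁ →ₗ[ℝ] V₁) : ℝ :=
  Real.sqrt (LinearMap.trace ℝ V₁ (LinearMap.adjoint F ∘ₗ F))

/-- `J` is the J-operator of the bracket `B` with respect to the vertical inner product `g`:
`⟨J_T U, V⟩_h = g(B(U,V), T)` for all `U V : V₁`, `T : V₂`. -/
def IsJOp (B : V₁ →ₗ[ℝ] V₁ →ₗ[ℝ] V₂) (g : V₂ →ₗ[ℝ] V₂ →ₗ[ℝ] ℝ)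
    (J : V₂ → V₁ →ₗ[ℝ] V₁) : Prop :=
  ∀ (T : V₂) (U V : V₁), ⟪J T U, V⟫ = g (B U V) T

/-- The H-type deviation relative to a fixed vertical inner product `g` with J-operator `J`:
`δ(g) = (dim V₁)^{-1/2} sup { ‖(J_T)² + id‖_HS : ‖T‖_g = 1 }`. -/
def deltaOf (g : V₂ →ₗ[ℝ] V₂ →ₗ[ℝ] ℝ) (J : V₂ → V₁ →ₗ[ℝ] V₁) : ℝ :=
  (Real.sqrt (Module.finrank ℝ V₁))⁻¹ *
    sSup ((fun T => hsNorm (J T ∘ₗ J T + LinearMap.id)) '' {T : V₂ | gnorm g T = 1})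

/-- The H-type deviation of a step-two Carnot datum: the infimum of `δ(g)` over all vertical
inner products `g` on `V₂`. -/
def htypeDeviation (B : V₁ →ₗ[ℝ] V₁ →ₗ[ℝ] V₂) : ℝ :=
  sInf { d : ℝ | ∃ (g : V₂ →ₗ[ℝ] V₂ →ₗ[ℝ] ℝ) (J : V₂ → V₁ →ₗ[ℝ] V₁),
    IsInnerProd g ∧ IsJOp B g J ∧ d = deltaOf g J }

end

noncomputable section

open scoped RealInnerProductSpace

/-- Auxiliary J-operator for the anisotropic Heisenberg bracket. -/
def heisJ (n : ℕ) (b : Fin n → ℝ) (c : ℝ) (T : ℝ) :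
    EuclideanSpace ℝ (Fin n ⊕ Fin n) →ₗ[ℝ] EuclideanSpace ℝ (Fin n ⊕ Fin n) where
  toFun u := WithLp.toLp 2 fun k => Sum.elim (fun j => -(c * T * b j) * u (Sum.inr j))
    (fun j => (c * T * b j) * u (Sum.inl j)) k
  map_add' u v := by
    ext k
    cases k <;> simp [PiLp.add_apply, PiLp.toLp_apply] <;> ring
  map_smul' a u := by
    ext k
    cases k <;> simp [PiLp.smul_apply, smul_eq_mul, PiLp.toLp_apply] <;> ring

/-- The anisotropic Heisenberg group `Heis^n(b)` is a nascent H-type group if and only if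
the vector `b` is constant: `b₁ = b₂ = ⋯ = bₙ`. -/
theorem anisotropic_Heisenberg_nascent_iff_const
    (n : ℕ) (hn : 1 ≤ n) (b : Fin n → ℝ) (hb : ∀ j, 0 < b j)
    (B : EuclideanSpace ℝ (Fin n ⊕ Fin n) →ₗ[ℝ] EuclideanSpace ℝ (Fin n ⊕ Fin n) →ₗ[ℝ] ℝ)
    (hB : ∀ u v : EuclideanSpace ℝ (Fin n ⊕ Fin n),
      B u v = ∑ j : Fin n, b j *
        (u (Sum.inl j) * v (Sum.inr j) - u (Sum.inr j) * v (Sum.inl j))) :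
    (∃ (g : ℝ →ₗ[ℝ] ℝ →ₗ[ℝ] ℝ) (J : ℝ → EuclideanSpace ℝ (Fin n ⊕ Fin n) →ₗ[ℝ]
        EuclideanSpace ℝ (Fin n ⊕ Fin n)),
      IsInnerProd g ∧ IsJOp B g J ∧
      ∀ T : ℝ, J T ∘ₗ J T = -(gnorm g T ^ 2) •
        (LinearMap.id : EuclideanSpace ℝ (Fin n ⊕ Fin n) →ₗ[ℝ]
          EuclideanSpace ℝ (Fin n ⊕ Fin n))) ↔
    ∀ i j : Fin n, b i = b j := by

  constructor
  · rintro ⟨g, J, hg, hJ, hsq⟩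
    set c : ℝ := g 1 1 with hc
    have hcpos : 0 < c := hg.posdef 1 one_ne_zero
    have hgst : ∀ s t : ℝ, g s t = s * t * c := by
      intro s t
      have h1 : g s t = s • (g 1 t) := by
        rw [← LinearMap.smul_apply, ← map_smul, smul_eq_mul, mul_one]
      have h2 : g 1 t = t • (g 1 1) := by
        rw [← map_smul, smul_eq_mul, mul_one]
      rw [h1, h2, smul_eq_mul, smul_eq_mul, ← hc]; ring
    -- key: c * b i ^ 2 = 1 for each i
    have key : ∀ i : Fin n, c * b i ^ 2 = 1 := by
      intro i
      have h1 : J 1 (EuclideanSpace.single (Sum.inl i) 1)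
          = (c * b i) • EuclideanSpace.single (Sum.inr i) (1:ℝ) := by
        apply ext_inner_right ℝ
        intro v
        rw [hJ, hB]
        rw [real_inner_smul_left]
        simp [EuclideanSpace.inner_single_left, EuclideanSpace.single_apply, hgst,
          Sum.inl.injEq, mul_ite, Finset.sum_ite_eq']
        ring
      have h2 : J 1 (EuclideanSpace.single (Sum.inr i) 1)
          = (-(c * b i)) • EuclideanSpace.single (Sum.inl i) (1:ℝ) := by
        apply ext_inner_right ℝ
        intro v
        rw [hJ, hB]
        rw [real_inner_smul_left]
        simp [EuclideanSpace.inner_single_left, EuclideanSpace.single_apply, hgst,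
          Sum.inr.injEq, mul_ite, Finset.sum_ite_eq']
        ring
      have h3 := congrArg (fun F => F (EuclideanSpace.single (Sum.inl i) (1:ℝ))) (hsq 1)
      simp only [LinearMap.comp_apply, LinearMap.smul_apply, LinearMap.id_apply] at h3
      rw [h1, map_smul, h2] at h3
      have hg1 : gnorm g 1 ^ 2 = c := by
        rw [gnorm, Real.sq_sqrt hcpos.le]
      rw [hg1] at h3
      have h4 := congrArg (fun x => x (Sum.inl i)) h3
      simp [EuclideanSpace.single_apply] at h4
      nlinarith [h4]
    intro i j
    have hi := key i
    have hj := key j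
    nlinarith [hb i, hb j, sq_nonneg (b i - b j), sq_nonneg (b i + b j)]
  · intro hconst
    set β : ℝ := b ⟨0, hn⟩ with hβ
    have hβpos : 0 < β := hb _
    have hbj : ∀ j, b j = β := fun j => hconst j ⟨0, hn⟩
    set c : ℝ := (β ^ 2)⁻¹ with hc
    have hcpos : 0 < c := by positivity
    refine ⟨c • LinearMap.mul ℝ ℝ, heisJ n b c, ?_, ?_, ?_⟩
    · constructor
      · intro s t
        simp only [LinearMap.smul_apply, LinearMap.mul_apply', smul_eq_mul]; ring
      · intro t ht
        simp only [LinearMap.smul_apply, LinearMap.mul_apply', smul_eq_mul]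
        have h : 0 < t * t := mul_self_pos.mpr ht
        positivity
    · intro T u v
      rw [hB]
      simp only [PiLp.inner_apply, RCLike.inner_apply, conj_trivial, heisJ, PiLp.toLp_apply,
        LinearMap.coe_mk, AddHom.coe_mk, LinearMap.smul_apply, LinearMap.mul_apply',
        smul_eq_mul, map_sum]
      rw [Fintype.sum_sum_type]
      simp only [Sum.elim_inl, Sum.elim_inr, LinearMap.sum_apply, LinearMap.smul_apply,
        LinearMap.mul_apply', smul_eq_mul]
      rw [← Finset.sum_add_distrib]
      apply Finset.sum_congr rfl
      intro j _
      ring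
    · intro T
      have hg : gnorm (c • LinearMap.mul ℝ ℝ) T ^ 2 = c * T ^ 2 := by
        have h0 : ((c • LinearMap.mul ℝ ℝ : ℝ →ₗ[ℝ] ℝ →ₗ[ℝ] ℝ) T) T = c * (T * T) := by
          simp only [LinearMap.smul_apply, LinearMap.mul_apply', smul_eq_mul]
        rw [gnorm, h0, Real.sq_sqrt (mul_nonneg hcpos.le (mul_self_nonneg T))]
        ring
      rw [hg]
      apply LinearMap.ext
      intro u
      ext k
      have hcb : ∀ j, c * T * b j * (c * T * b j) = c * T ^ 2 := by
        intro j
        rw [hbj j, hc]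
        field_simp
      cases k with
      | inl j =>
        simp only [LinearMap.comp_apply, heisJ, LinearMap.coe_mk, AddHom.coe_mk,
          Sum.elim_inl, Sum.elim_inr, LinearMap.smul_apply, LinearMap.id_apply,
          PiLp.smul_apply, smul_eq_mul, PiLp.toLp_apply]
        linear_combination (-(u (Sum.inl j))) * hcb j
      | inr j =>
        simp only [LinearMap.comp_apply, heisJ, LinearMap.coe_mk, AddHom.coe_mk,
          Sum.elim_inl, Sum.elim_inr, LinearMap.smul_apply, LinearMap.id_apply,
          PiLp.smul_apply, smul_eq_mul, PiLp.toLp_apply]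
        linear_combination (-(u (Sum.inr j))) * hcb j

end
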